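/- If a history-deterministic Parikh automaton (A, C) is length-complete, then the Parikh automaton (A', C) obtained by relabeling every input letter to a single letter # accepts exactly {#}*, and (A', C) is history-deterministic if and only if (A, C) has a safe word. -/

import Mathlib

open scoped BigOperators

/-- A set `C ⊆ ℕ^d` is linear if `C = {v₀ + Σᵢ cᵢ vᵢ | cᵢ ∈ ℕ}` for some vectors. -/
def IsLinear {d : ℕ} (C : Set (Fin d → ℕ)) : Prop :=
  ∃ (k : ℕ) (v₀ : Fin d → ℕ) (v : Fin k → Fin d → ℕ),
    C = {x | ∃ c : Fin k → ℕ, x = v₀ + ∑ i, c i • v i}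

/-- A set is semilinear if it is a finite union of linear sets. -/
def IsSemilinear {d : ℕ} (C : Set (Fin d → ℕ)) : Prop :=
  ∃ (m : ℕ) (Cs : Fin m → Set (Fin d → ℕ)),
    (∀ i, IsLinear (Cs i)) ∧ C = ⋃ i, Cs i

/-- A Parikh automaton over alphabet `A` of dimension `d`: an NFA whose transitions are
labeled by a letter and a vector in `ℕ^d`, together with a semilinear acceptance set `C`. -/
structure PA (A : Type) (d : ℕ) where
  n : ℕ
  init : Fin n
  final : Set (Fin n)
  trans : Set (Fin n × (A × (Fin d → ℕ)) × Fin n)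
  transFin : trans.Finite
  C : Set (Fin d → ℕ)
  hC : IsSemilinear C

namespace PA

variable {A : Type} {d : ℕ}

/-- The type of transitions of a Parikh automaton. -/
abbrev Tr (P : PA A d) := Fin P.n × (A × (Fin d → ℕ)) × Fin P.n

/-- The word processed by a run (its Σ-projection). -/
def word (P : PA A d) (ρ : List P.Tr) : List A := ρ.map (fun t => t.2.1.1)

/-- The extended Parikh image of a run: the sum of the vector labels. -/
def image (P : PA A d) (ρ : List P.Tr) : Fin d → ℕ := (ρ.map (fun t => t.2.1.2)).sum

/-- The last state of a run (the initial state for the empty run). -/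
def lastState (P : PA A d) (ρ : List P.Tr) : Fin P.n :=
  (ρ.getLast?).elim P.init (fun t => t.2.2)

/-- A run: a sequence of transitions of `P`, consecutively matching, starting in the
initial state. -/
def IsRun (P : PA A d) (ρ : List P.Tr) : Prop :=
  (∀ t ∈ ρ, t ∈ P.trans) ∧
  ρ.Chain' (fun t t' => t.2.2 = t'.1) ∧
  (∀ t, ρ.head? = some t → t.1 = P.init)

/-- An accepting run: a run ending in an accepting state whose extended Parikh image
lies in `C`. -/
def Accepting (P : PA A d) (ρ : List P.Tr) : Prop :=
  P.IsRun ρ ∧ P.lastState ρ ∈ P.final ∧ P.image ρ ∈ P.C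

/-- The language of a Parikh automaton. -/
def Lang (P : PA A d) : Set (List A) :=
  {w | ∃ ρ, P.Accepting ρ ∧ P.word ρ = w}

/-- Determinism: for every state and letter there is at most one outgoing transition. -/
def Deterministic (P : PA A d) : Prop :=
  ∀ (q : Fin P.n) (a : A),
    Set.Subsingleton {p : Fin P.n × (Fin d → ℕ) | (q, (a, p.2), p.1) ∈ P.trans}

/-- Iterating a resolver `r` (fed the history and the next letter) along a word;
`pre` is the prefix read so far. -/
def iterResAux (P : PA A d) (r : List A → A → P.Tr) : List A → List A → List P.Tr
  | _, [] => []
  | pre, a :: rest => r pre a :: P.iterResAux r (pre ++ [a]) rest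

/-- The run built by iterating the resolver `r` letter by letter along `w`. -/
def iterRes (P : PA A d) (r : List A → A → P.Tr) (w : List A) : List P.Tr :=
  P.iterResAux r [] w

/-- `r` is a resolver: for every accepted word `w`, iterating `r` along `w` yields an
accepting run processing `w`. -/
def IsResolver (P : PA A d) (r : List A → A → P.Tr) : Prop :=
  ∀ w ∈ P.Lang, P.Accepting (P.iterRes r w) ∧ P.word (P.iterRes r w) = w

/-- A Parikh automaton is history-deterministic if it has a resolver. -/
def HistoryDeterministic (P : PA A d) : Prop := ∃ r, P.IsResolver r

end PA

namespace PA

variable {A : Type} {d : ℕ}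

/-- Relabeling every input letter of a Parikh automaton to the single letter `#`
(here: the unique element of `Unit`). -/
def relabel (P : PA A d) : PA Unit d where
  n := P.n
  init := P.init
  final := P.final
  trans := (fun t : P.Tr =>
    ((t.1, (((), t.2.1.2), t.2.2)) : Fin P.n × (Unit × (Fin d → ℕ)) × Fin P.n)) '' P.trans
  transFin := P.transFin.image _
  C := P.C
  hC := P.hC

/-- Length-completeness: the language contains a word of every length. -/
def LengthComplete (P : PA A d) : Prop := ∀ n : ℕ, ∃ w ∈ P.Lang, w.length = n

/-- A safe word: an infinite word all of whose finite prefixes are accepted. -/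
def SafeWord (P : PA A d) (σ : ℕ → A) : Prop :=
  ∀ n : ℕ, (List.ofFn (fun i : Fin n => σ i)) ∈ P.Lang

end PA

namespace PA

variable {A : Type} {d : ℕ}

/-- The relabeling map on transitions. -/
def F (P : PA A d) : P.Tr → P.relabel.Tr := fun t => (t.1, (((), t.2.1.2), t.2.2))

lemma unitList_eq (l : List Unit) : l = List.replicate l.length () := by
  induction l with
  | nil => rfl
  | cons a l ih => simpa [List.replicate_succ] using ih

lemma unitList_eq_of_length {l1 l2 : List Unit} (h : l1.length = l2.length) : l1 = l2 := by
  rw [unitList_eq l1, unitList_eq l2, h]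

lemma word_length (P : PA A d) (ρ : List P.Tr) : (P.word ρ).length = ρ.length := by
  simp [word]

lemma iterResAux_unit (P : PA Unit d) (r : List Unit → Unit → P.Tr) :
    ∀ (w : List Unit) (n : ℕ), w.length = n → ∀ (pre : List Unit),
      P.iterResAux r pre w =
        List.ofFn (fun i : Fin n => r (List.replicate (pre.length + (i : ℕ)) ()) ())
  | [], n, hn, pre => by subst hn; simp [iterResAux]
  | a :: w, n, hn, pre => by
    subst hn
    rw [iterResAux, iterResAux_unit P r w w.length rfl (pre ++ [a])]
    rw [List.length_cons, List.ofFn_succ]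
    congr 1
    · conv_lhs => rw [unitList_eq pre]
      simp
    · apply congrArg
      funext i
      congr 1
      simp
      omega

lemma iterRes_unit (P : PA Unit d) (r : List Unit → Unit → P.Tr) (w : List Unit) (n : ℕ)
    (hn : w.length = n) :
    P.iterRes r w = List.ofFn (fun i : Fin n => r (List.replicate (i : ℕ) ()) ()) := by
  simpa [iterRes] using iterResAux_unit P r w n hn []

lemma lastState_map (P : PA A d) (l : List P.Tr) :
    P.relabel.lastState (l.map P.F) = P.lastState l := by
  unfold lastState
  rw [List.getLast?_map]
  cases l.getLast? <;> rfl

lemma image_map (P : PA A d) (l : List P.Tr) :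
    P.relabel.image (l.map P.F) = P.image l := by
  simp only [image, List.map_map]
  rfl

lemma chain_map (P : PA A d) (l : List P.Tr) :
    (l.map P.F).Chain' (fun t t' => t.2.2 = t'.1) ↔
      l.Chain' (fun t t' => t.2.2 = t'.1) := by
  simp only [List.Chain']
  rw [List.isChain_map]
  constructor <;> (intro h; exact h.imp (fun a b hab => hab))

lemma accepting_map (P : PA A d) (l : List P.Tr) (h : P.Accepting l) :
    P.relabel.Accepting (l.map P.F) := by
  obtain ⟨⟨hmem, hch, hhd⟩, hfin, hC⟩ := h
  refine ⟨⟨?_, (chain_map P l).2 hch, ?_⟩, ?_, ?_⟩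
  · rintro t ht
    obtain ⟨s, hs, rfl⟩ := List.mem_map.1 ht
    exact Set.mem_image_of_mem _ (hmem s hs)
  · intro t ht
    rw [List.head?_map] at ht
    cases hh : l.head? with
    | none => rw [hh] at ht; simp at ht
    | some s => rw [hh] at ht; simp at ht; rw [← ht]; exact hhd s hh
  · rwa [lastState_map]
  · rwa [image_map]

lemma accepting_of_map (P : PA A d) (l : List P.Tr) (hmem : ∀ t ∈ l, t ∈ P.trans)
    (h : P.relabel.Accepting (l.map P.F)) : P.Accepting l := by
  obtain ⟨⟨_, hch, hhd⟩, hfin, hC⟩ := h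
  refine ⟨⟨hmem, (chain_map P l).1 hch, ?_⟩, ?_, ?_⟩
  · intro t ht
    have : (l.map P.F).head? = some (P.F t) := by rw [List.head?_map, ht]; rfl
    exact hhd _ this
  · rwa [lastState_map] at hfin
  · rwa [image_map] at hC

/-- A run starting from a given state. -/
def IsRunFrom (P : PA A d) (q : Fin P.n) (l : List P.Tr) : Prop :=
  (∀ t ∈ l, t ∈ P.trans) ∧
  l.Chain' (fun t t' => t.2.2 = t'.1) ∧
  (∀ t, l.head? = some t → t.1 = q)

lemma isRun_iff_isRunFrom (P : PA A d) (l : List P.Tr) :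
    P.IsRun l ↔ P.IsRunFrom P.init l := Iff.rfl

lemma isRunFrom_take (P : PA A d) {q : Fin P.n} {l : List P.Tr}
    (h : P.IsRunFrom q l) (k : ℕ) : P.IsRunFrom q (l.take k) := by
  obtain ⟨hmem, hch, hhd⟩ := h
  refine ⟨fun t ht => hmem t (List.mem_of_mem_take ht), hch.take k, ?_⟩
  intro t ht
  apply hhd
  cases l with
  | nil => simp at ht
  | cons a l =>
    cases k with
    | zero => simp at ht
    | succ k => simpa using ht

lemma runFrom_unique (P : PA A d) (hdet : P.Deterministic) :
    ∀ (l1 : List P.Tr) (q : Fin P.n) (l2 : List P.Tr),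
      P.IsRunFrom q l1 → P.IsRunFrom q l2 → P.word l1 = P.word l2 → l1 = l2
  | [], q, l2, _, _, hw => by
    simp only [word, List.map_nil] at hw
    exact (List.map_eq_nil_iff.1 hw.symm).symm
  | t :: l1, q, l2, h1, h2, hw => by
    cases l2 with
    | nil => simp [word] at hw
    | cons t' l2 =>
      obtain ⟨hmem1, hch1, hhd1⟩ := h1
      obtain ⟨hmem2, hch2, hhd2⟩ := h2
      have hq1 : t.1 = q := hhd1 t rfl
      have hq2 : t'.1 = q := hhd2 t' rfl
      simp only [word, List.map_cons, List.cons.injEq] at hw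
      obtain ⟨ha, hw'⟩ := hw
      have hm1 : (t.2.2, t.2.1.2) ∈
          {p : Fin P.n × (Fin d → ℕ) | (q, (t.2.1.1, p.2), p.1) ∈ P.trans} := by
        show (q, (t.2.1.1, t.2.1.2), t.2.2) ∈ P.trans
        rw [← hq1]
        exact hmem1 t List.mem_cons_self
      have hm2 : (t'.2.2, t'.2.1.2) ∈
          {p : Fin P.n × (Fin d → ℕ) | (q, (t.2.1.1, p.2), p.1) ∈ P.trans} := by
        show (q, (t.2.1.1, t'.2.1.2), t'.2.2) ∈ P.trans
        rw [ha, ← hq2]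
        exact hmem2 t' List.mem_cons_self
      have hpp := hdet q t.2.1.1 hm1 hm2
      have hpp1 : t.2.2 = t'.2.2 := (Prod.ext_iff.1 hpp).1
      have hpp2 : t.2.1.2 = t'.2.1.2 := (Prod.ext_iff.1 hpp).2
      have htt : t = t' := by
        obtain ⟨q1, ⟨a1, v1⟩, c1⟩ := t
        obtain ⟨q1', ⟨a1', v1'⟩, c1'⟩ := t'
        simp only [Prod.mk.injEq]
        exact ⟨hq1.trans hq2.symm, ⟨ha, hpp2⟩, hpp1⟩
      subst htt
      have htail : l1 = l2 := by
        apply runFrom_unique P hdet l1 t.2.2 l2 _ _ hw'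
        · exact ⟨fun s hs => hmem1 s (List.mem_cons_of_mem _ hs),
            (List.isChain_cons.1 hch1).2,
            fun s hs => ((List.isChain_cons.1 hch1).1 s hs).symm⟩
        · exact ⟨fun s hs => hmem2 s (List.mem_cons_of_mem _ hs),
            (List.isChain_cons.1 hch2).2,
            fun s hs => ((List.isChain_cons.1 hch2).1 s hs).symm⟩
      rw [htail]

end PA

/-- For a deterministic, length-complete Parikh automaton `P`, the relabeled automaton
accepts exactly `{#}*`, and it is history-deterministic iff `P` has a safe word. -/
theorem relabel_lang_univ_and_hd_iff_safe {A : Type} {d : ℕ} (P : PA A d)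
    (hdet : P.Deterministic) (hhd : P.HistoryDeterministic) (hlc : P.LengthComplete) :
    P.relabel.Lang = Set.univ ∧
      (P.relabel.HistoryDeterministic ↔ ∃ σ : ℕ → A, P.SafeWord σ) := by
  have hLang : P.relabel.Lang = Set.univ := by
    ext w
    simp only [Set.mem_univ, iff_true]
    obtain ⟨v, hv, hlen⟩ := hlc w.length
    obtain ⟨ρ, hρ, hwρ⟩ := hv
    refine ⟨ρ.map P.F, P.accepting_map ρ hρ, ?_⟩
    apply PA.unitList_eq_of_length
    have h1 : ρ.length = w.length := by
      rw [← hlen, ← hwρ, PA.word_length]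
    rw [PA.word_length]
    simpa using h1
  refine ⟨hLang, ?_, ?_⟩
  · -- HD of relabel → safe word
    rintro ⟨r, hr⟩
    let t : ℕ → P.relabel.Tr := fun n => r (List.replicate n ()) ()
    have hacc : ∀ n, P.relabel.Accepting (List.ofFn (fun i : Fin n => t (i : ℕ))) := by
      intro n
      have hw : (List.replicate n () : List Unit) ∈ P.relabel.Lang := by
        rw [hLang]; trivial
      have h := (hr _ hw).1
      rwa [PA.iterRes_unit P.relabel r _ n (by simp)] at h
    have htrans : ∀ n, t n ∈ P.relabel.trans := by
      intro n
      have hmem : t n ∈ List.ofFn (fun i : Fin (n + 1) => t (i : ℕ)) := by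
        rw [List.mem_ofFn]
        exact ⟨Fin.last n, by simp⟩
      exact (hacc (n + 1)).1.1 _ hmem
    have hchoice : ∀ n, ∃ u ∈ P.trans, P.F u = t n := fun n => htrans n
    choose s hs1 hs2 using hchoice
    refine ⟨fun n => (s n).2.1.1, ?_⟩
    intro n
    refine ⟨List.ofFn (fun i : Fin n => s (i : ℕ)), ?_, ?_⟩
    · apply P.accepting_of_map
      · intro x hx
        obtain ⟨i, rfl⟩ := List.mem_ofFn.1 hx
        exact hs1 _
      · have hmf : (List.ofFn (fun i : Fin n => s (i : ℕ))).map P.F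
            = List.ofFn (fun i : Fin n => t (i : ℕ)) := by
          rw [List.map_ofFn]
          exact congrArg _ (funext fun i => hs2 _)
        rw [hmf]; exact hacc n
    · simp only [PA.word, List.map_ofFn]; rfl
  · -- safe word → HD of relabel
    rintro ⟨σ, hσ⟩
    have hR : ∀ n, ∃ ρ, P.Accepting ρ ∧ P.word ρ = List.ofFn (fun i : Fin n => σ i) :=
      fun n => hσ n
    choose R hRacc hRword using hR
    have hRlen : ∀ n, (R n).length = n := by
      intro n
      have := congrArg List.length (hRword n)
      rw [PA.word_length] at this
      simpa using this
    have hwsucc : ∀ n, List.ofFn (fun i : Fin (n + 1) => σ i)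
        = (List.ofFn (fun i : Fin n => σ i)) ++ [σ n] := by
      intro n
      rw [List.ofFn_succ']
      simp [List.concat_eq_append]
    have htake : ∀ n, (R (n + 1)).take n = R n := by
      intro n
      apply P.runFrom_unique hdet _ P.init
      · exact P.isRunFrom_take ((P.isRun_iff_isRunFrom _).1 (hRacc (n + 1)).1) n
      · exact (P.isRun_iff_isRunFrom _).1 (hRacc n).1
      · have hwt : P.word ((R (n + 1)).take n) = (P.word (R (n + 1))).take n := by
          unfold PA.word; rw [List.map_take]
        rw [hwt, hRword (n + 1), hRword n, hwsucc n]
        exact List.take_left' (by simp)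
    have hne : R 1 ≠ [] := by
      intro h
      have := hRlen 1
      rw [h] at this
      simp at this
    obtain ⟨t₀, l₀, hE⟩ : ∃ t l, R 1 = t :: l := by
      cases h : R 1 with
      | nil => exact absurd h hne
      | cons a l => exact ⟨a, l, rfl⟩
    let s : ℕ → P.Tr := fun n => (R (n + 1)).getD n t₀
    have hofn : ∀ n, List.ofFn (fun i : Fin n => s (i : ℕ)) = R n := by
      intro n
      induction n with
      | zero =>
        have h0 := hRlen 0
        simp only [List.ofFn_zero]
        exact (List.length_eq_zero_iff.1 h0).symm
      | succ n ih =>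
        have hlt : n < (R (n + 1)).length := by rw [hRlen]; omega
        have hdrop : (R (n + 1)).drop n = [s n] := by
          rw [List.drop_eq_getElem_cons hlt]
          have h2 : (R (n + 1)).drop (n + 1) = [] := by
            apply List.drop_eq_nil_of_le
            rw [hRlen]
          rw [h2]
          have h3 : s n = (R (n + 1))[n] := List.getD_eq_getElem _ _ hlt
          rw [h3]
        calc List.ofFn (fun i : Fin (n + 1) => s (i : ℕ))
            = (List.ofFn (fun i : Fin n => s (i : ℕ))) ++ [s n] := by
              rw [List.ofFn_succ']; simp [List.concat_eq_append]
          _ = R n ++ [s n] := by rw [ih]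
          _ = (R (n + 1)).take n ++ (R (n + 1)).drop n := by rw [htake n, hdrop]
          _ = R (n + 1) := List.take_append_drop n _
    refine ⟨fun pre _ => P.F (s pre.length), ?_⟩
    intro w hw
    have hiter : P.relabel.iterRes (fun pre _ => P.F (s pre.length)) w
        = (R w.length).map P.F := by
      rw [PA.iterRes_unit _ _ w w.length rfl, ← hofn w.length, List.map_ofFn]
      apply congrArg
      funext i
      simp [Function.comp]
    constructor
    · rw [hiter]
      exact P.accepting_map _ (hRacc w.length)
    · rw [hiter]
      apply PA.unitList_eq_of_length
      rw [PA.word_length]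
      simp [hRlen]
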